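/- Let φ : ℝ → ℝ be twice differentiable with |φ'(t)| ≥ μ_φ > 0 and |φ''(t)| ≤ M for all t ∈ ℝ, let c₁, …, c_m ∈ ℝⁿ and y ∈ ℝᵐ, and define P : ℝⁿ → ℝᵐ by P_i(x) = φ(⟨c_i, x⟩) − y_i. Let x ∈ ℝⁿ, let z ∈ ℝⁿ satisfy ⟨c_i, z⟩ = P_i(x)/φ'(⟨c_i, x⟩) for each i = 1, …, m (i.e. P'(x) z = P(x) by structure), and let 0 ≤ α ≤ 1. Then, with u = max_i |P_i(x)| the ℓ∞ norm of the residual, max_i |P_i(x − αz)| ≤ (1 − α)·u + (M/(2 μ_φ²))·α²·u²; i.e. the one-step recurrence u_{k+1} ≤ (1 − α)u_k + γ (α² u_k²)/2 holds with γ = M/μ_φ², independently of the vectors c_i. -/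

import Mathlib

lemma taylor2_bound (f f' f'' : ℝ → ℝ)
    (hd1 : ∀ t, HasDerivAt f (f' t) t)
    (hd2 : ∀ t, HasDerivAt f' (f'' t) t)
    (M : ℝ) (hM : ∀ t, |f'' t| ≤ M) (a b : ℝ) :
    |f b - f a - (b - a) * f' a| ≤ M / 2 * (b - a) ^ 2 := by
  have hM0 : 0 ≤ M := le_trans (abs_nonneg _) (hM 0)
  -- f' is M-Lipschitz
  have hlip : ∀ u v : ℝ, |f' u - f' v| ≤ M * |u - v| := by
    intro u v
    have := Convex.norm_image_sub_le_of_norm_hasDerivWithin_le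
      (f := f') (f' := f'') (s := Set.univ) (C := M)
      (fun t _ => (hd2 t).hasDerivWithinAt)
      (fun t _ => by simpa using hM t) convex_univ (Set.mem_univ v) (Set.mem_univ u)
    simpa [Real.norm_eq_abs] using this
  set K : ℝ := M * (b - a) ^ 2 with hK
  have hK0 : 0 ≤ K := by positivity
  set g : ℝ → ℝ := fun u => f (a + u * (b - a)) - f a - u * ((b - a) * f' a) with hgdef
  have hg : ∀ u : ℝ, HasDerivAt g ((b - a) * (f' (a + u * (b - a)) - f' a)) u := by
    intro u
    have h1 : HasDerivAt (fun u : ℝ => f (a + u * (b - a))) (f' (a + u * (b - a)) * (b - a)) u :=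
      HasDerivAt.comp u (hd1 _) (by simpa using (((hasDerivAt_id u).mul_const (b - a)).const_add a))
    have h2 := ((h1.sub_const (f a)).sub ((hasDerivAt_id u).mul_const ((b - a) * f' a)))
    exact h2.congr_deriv (by ring)
  have hg0 : g 0 = 0 := by simp [hgdef]
  have hgderiv_bound : ∀ u : ℝ, 0 ≤ u →
      |(b - a) * (f' (a + u * (b - a)) - f' a)| ≤ K * u := by
    intro u hu
    rw [abs_mul]
    calc |b - a| * |f' (a + u * (b - a)) - f' a|
        ≤ |b - a| * (M * |a + u * (b - a) - a|) := by
          exact mul_le_mul_of_nonneg_left (hlip _ _) (abs_nonneg _)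
      _ = M * (b - a) ^ 2 * u := by
          rw [show a + u * (b - a) - a = u * (b - a) by ring, abs_mul,
            abs_of_nonneg hu, ← sq_abs (b - a)]
          ring
  -- monotonicity argument for ± g
  have key : ∀ (σ : ℝ), σ = 1 ∨ σ = -1 → σ * g 1 ≤ K / 2 := by
    intro σ hσ
    set F : ℝ → ℝ := fun u => K / 2 * u ^ 2 - σ * g u with hF
    have hF' : ∀ u : ℝ, HasDerivAt F (K * u - σ * ((b - a) * (f' (a + u * (b - a)) - f' a))) u := by
      intro u
      have := (((hasDerivAt_pow 2 u).const_mul (K / 2)).sub ((hg u).const_mul σ))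
      exact this.congr_deriv (by norm_num; ring)
    have hmono : MonotoneOn F (Set.Icc 0 1) := by
      apply monotoneOn_of_deriv_nonneg (convex_Icc 0 1)
      · exact fun u _ => ((hF' u).continuousAt).continuousWithinAt
      · exact fun u _ => ((hF' u).differentiableAt).differentiableWithinAt
      · intro u hu
        rw [interior_Icc] at hu
        rw [(hF' u).deriv]
        have hb := hgderiv_bound u hu.1.le
        have : σ * ((b - a) * (f' (a + u * (b - a)) - f' a)) ≤ K * u := by
          rcases hσ with h | h <;> subst h
          · simpa using (le_abs_self _).trans hb
          · simpa using (neg_le_abs _).trans hb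
        linarith
    have := hmono (Set.mem_Icc.2 ⟨le_refl 0, zero_le_one⟩) (Set.mem_Icc.2 ⟨zero_le_one, le_refl 1⟩) zero_le_one
    simp only [hF, hg0] at this
    nlinarith [this]
  have hg1 : g 1 = f b - f a - (b - a) * f' a := by
    show f (a + 1 * (b - a)) - f a - 1 * ((b - a) * f' a) = _
    rw [show a + 1 * (b - a) = b by ring]; ring
  have h1 := key 1 (Or.inl rfl)
  have h2 := key (-1) (Or.inr rfl)
  rw [abs_le]
  constructor <;> rw [← hg1] <;> nlinarith [h1, h2]

/-- structured problems `P_i(x) = φ(⟨c_i,x⟩) − y_i`: the one-step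
recurrence for the ℓ∞ residual holds with `γ = M/μ_φ²`, independently of the `c_i`.
Here `Fin m → ℝ` carries the sup (ℓ∞) norm. -/
theorem stmt18 {n m : ℕ} (μφ M : ℝ) (hμφ : 0 < μφ) (hM : 0 < M)
    (φ φ' φ'' : ℝ → ℝ)
    (hd1 : ∀ t, HasDerivAt φ (φ' t) t)
    (hd2 : ∀ t, HasDerivAt φ' (φ'' t) t)
    (hlo : ∀ t, μφ ≤ |φ' t|) (hhi : ∀ t, |φ'' t| ≤ M)
    (c : Fin m → EuclideanSpace ℝ (Fin n)) (y : Fin m → ℝ)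
    (P : EuclideanSpace ℝ (Fin n) → Fin m → ℝ)
    (hP : ∀ x i, P x i = φ (inner ℝ (c i) x : ℝ) - y i)
    (x z : EuclideanSpace ℝ (Fin n))
    (hz : ∀ i, (inner ℝ (c i) z : ℝ) = P x i / φ' (inner ℝ (c i) x : ℝ))
    (α : ℝ) (hα0 : 0 ≤ α) (hα1 : α ≤ 1) :
    ‖P (x - α • z)‖ ≤ (1 - α) * ‖P x‖ + M / (2 * μφ ^ 2) * α ^ 2 * ‖P x‖ ^ 2 := by
  have hα' : 0 ≤ 1 - α := by linarith
  have hRHS : 0 ≤ (1 - α) * ‖P x‖ + M / (2 * μφ ^ 2) * α ^ 2 * ‖P x‖ ^ 2 := by positivity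
  rw [pi_norm_le_iff_of_nonneg hRHS]
  intro i
  set t : ℝ := (inner ℝ (c i) x : ℝ) with ht
  set s : ℝ := (inner ℝ (c i) z : ℝ) with hs
  have hφ't : φ' t ≠ 0 := by
    intro h
    have := hlo t
    rw [h, abs_zero] at this
    linarith
  have hsφ : s * φ' t = P x i := by
    rw [hs, hz i, ← ht, div_mul_cancel₀ _ hφ't]
  have hinner : (inner ℝ (c i) (x - α • z) : ℝ) = t - α * s := by
    rw [inner_sub_right, real_inner_smul_right, ht, hs]
  have hPval : P (x - α • z) i = φ (t - α * s) - y i := by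
    rw [hP, hinner]
  have htay := taylor2_bound φ φ' φ'' hd1 hd2 M hhi t (t - α * s)
  have hdecomp : P (x - α • z) i =
      (φ (t - α * s) - φ t - (t - α * s - t) * φ' t) + (1 - α) * P x i := by
    have hsφ2 : s * φ' t = φ t - y i := by rw [hsφ, hP x i]
    rw [hPval, hP x i]
    linear_combination (-α) * hsφ2
  -- bound on s
  have hnormPx : |P x i| ≤ ‖P x‖ := by
    simpa [Real.norm_eq_abs] using norm_le_pi_norm (P x) i
  have hs_bound : |s| ≤ ‖P x‖ / μφ := by
    rw [hs, hz i, ← ht, abs_div]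
    apply div_le_div₀ (by positivity) hnormPx hμφ (hlo t)
  have hs_sq : s ^ 2 ≤ ‖P x‖ ^ 2 / μφ ^ 2 := by
    have h := pow_le_pow_left₀ (abs_nonneg s) hs_bound 2
    rw [div_pow] at h
    simpa [sq_abs] using h
  have hR : |φ (t - α * s) - φ t - (t - α * s - t) * φ' t| ≤
      M / (2 * μφ ^ 2) * α ^ 2 * ‖P x‖ ^ 2 := by
    refine htay.trans ?_
    have : (t - α * s - t) ^ 2 = α ^ 2 * s ^ 2 := by ring
    rw [this]
    have h1 : M / 2 * (α ^ 2 * s ^ 2) ≤ M / 2 * (α ^ 2 * (‖P x‖ ^ 2 / μφ ^ 2)) := by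
      apply mul_le_mul_of_nonneg_left _ (by positivity)
      exact mul_le_mul_of_nonneg_left hs_sq (by positivity)
    refine h1.trans (le_of_eq ?_)
    field_simp
  calc ‖P (x - α • z) i‖ = |(φ (t - α * s) - φ t - (t - α * s - t) * φ' t) + (1 - α) * P x i| := by
        rw [Real.norm_eq_abs, hdecomp]
    _ ≤ |φ (t - α * s) - φ t - (t - α * s - t) * φ' t| + |(1 - α) * P x i| := abs_add_le _ _
    _ ≤ M / (2 * μφ ^ 2) * α ^ 2 * ‖P x‖ ^ 2 + (1 - α) * ‖P x‖ := by
        apply add_le_add hR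
        rw [abs_mul, abs_of_nonneg hα']
        exact mul_le_mul_of_nonneg_left hnormPx hα'
    _ = (1 - α) * ‖P x‖ + M / (2 * μφ ^ 2) * α ^ 2 * ‖P x‖ ^ 2 := by ring
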